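/- Let a, b, c be integers with a > 0 > c, a − |b| ≤ −c ≤ a + |b|, and k ≥ 1. Then the Mahler measure of g(x) = a·x^{2k} + b·x^k + c is M(g) = (|b| + √(b² − 4ac)) / 2. -/

import Mathlib

open Polynomial

noncomputable def mahlerMeasure (f : Polynomial ℂ) : ℝ :=
  ‖f.leadingCoeff‖ * ((f.roots).map (fun z => max 1 ‖z‖)).prod

lemma mm_mul (f g : Polynomial ℂ) (hf : f ≠ 0) (hg : g ≠ 0) :
    _root_.mahlerMeasure (f * g) = _root_.mahlerMeasure f * _root_.mahlerMeasure g := by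
  unfold _root_.mahlerMeasure
  rw [leadingCoeff_mul, roots_mul (mul_ne_zero hf hg), Multiset.map_add,
    Multiset.prod_add, norm_mul]
  ring

lemma mm_C (a : ℂ) : _root_.mahlerMeasure (C a) = ‖a‖ := by
  simp [_root_.mahlerMeasure]

lemma mm_pow_sub (k : ℕ) (hk : k ≠ 0) (r : ℂ) :
    _root_.mahlerMeasure (X ^ k - C r) = max 1 ‖r‖ := by
  have hmonic : (X ^ k - C r : Polynomial ℂ).Monic := monic_X_pow_sub_C r hk
  unfold _root_.mahlerMeasure
  rw [hmonic.leadingCoeff, norm_one, one_mul]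
  have hcard : Multiset.card (X ^ k - C r : Polynomial ℂ).roots = k := by
    have h := (splits_iff_card_roots (f := (X ^ k - C r : Polynomial ℂ))).mp
      (IsAlgClosed.splits _)
    rwa [natDegree_X_pow_sub_C] at h
  set t : ℝ := ‖r‖ ^ ((k : ℝ)⁻¹) with ht
  have hmem : ∀ z ∈ (X ^ k - C r : Polynomial ℂ).roots,
      (fun z => max 1 ‖z‖) z = max 1 t := by
    intro z hz
    have hzk : z ^ k = r := (mem_nthRoots (Nat.pos_of_ne_zero hk)).mp hz
    have hnz : ‖z‖ ^ k = ‖r‖ := by rw [← hzk]; simp [norm_pow]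
    have : t = ‖z‖ := by
      rw [ht, ← hnz, Real.pow_rpow_inv_natCast (norm_nonneg z) hk]
    simp [this]
  rw [Multiset.map_congr rfl hmem, Multiset.map_const', hcard, Multiset.prod_replicate]
  have hrnn : (0 : ℝ) ≤ ‖r‖ := norm_nonneg r
  have htr : t ^ k = ‖r‖ := Real.rpow_inv_natCast_pow hrnn hk
  have ht0 : 0 ≤ t := Real.rpow_nonneg hrnn _
  rcases le_total t 1 with h | h
  · have : ‖r‖ ≤ 1 := by rw [← htr]; exact pow_le_one₀ ht0 h
    rw [max_eq_left h, one_pow, max_eq_left this]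
  · have : 1 ≤ ‖r‖ := by rw [← htr]; exact one_le_pow₀ h
    rw [max_eq_right h, max_eq_right this, htr]

set_option maxHeartbeats 1000000 in
theorem mahler_trinomial (a b c : ℤ) (k : ℕ) (hk : 1 ≤ k) (ha : 0 < a) (hc : c < 0)
    (h1 : a - |b| ≤ -c) (h2 : -c ≤ a + |b|) :
    _root_.mahlerMeasure (C (a : ℂ) * X ^ (2 * k) + C (b : ℂ) * X ^ k + C (c : ℂ)) =
      (((|b| : ℤ) : ℝ) + Real.sqrt ((b : ℝ) ^ 2 - 4 * a * c)) / 2 := by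
  have hk0 : k ≠ 0 := by omega
  -- real data
  have hA0 : (0 : ℝ) < (a : ℝ) := by exact_mod_cast ha
  have hC0 : (c : ℝ) < 0 := by exact_mod_cast hc
  have h1' : (a : ℝ) - |(b : ℝ)| ≤ -(c : ℝ) := by exact_mod_cast h1
  have h2' : -(c : ℝ) ≤ (a : ℝ) + |(b : ℝ)| := by exact_mod_cast h2
  have hD0 : (0 : ℝ) ≤ (b : ℝ) ^ 2 - 4 * a * c := by nlinarith
  obtain ⟨s, hs⟩ : ∃ s : ℝ, s = Real.sqrt ((b : ℝ) ^ 2 - 4 * a * c) := ⟨_, rfl⟩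
  have hs0 : 0 ≤ s := hs ▸ Real.sqrt_nonneg _
  have hs2 : s ^ 2 = (b : ℝ) ^ 2 - 4 * a * c := hs ▸ Real.sq_sqrt hD0
  obtain ⟨rp, hrp⟩ : ∃ x : ℝ, x = (-(b : ℝ) + s) / (2 * a) := ⟨_, rfl⟩
  obtain ⟨rm, hrm⟩ : ∃ x : ℝ, x = (-(b : ℝ) - s) / (2 * a) := ⟨_, rfl⟩
  -- key relations
  have hsum : (a : ℝ) * (rp + rm) = -(b : ℝ) := by
    rw [hrp, hrm]; field_simp; ring
  have hprod : (a : ℝ) * (rp * rm) = (c : ℝ) := by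
    rw [hrp, hrm]
    have h4 : (-(b:ℝ) + s) * (-(b:ℝ) - s) = 4 * a * c := by nlinarith [hs2]
    field_simp
    nlinarith [hs2]
  -- factorization
  have e1 : (a : ℂ) * ((rp : ℂ) + (rm : ℂ)) = -(b : ℂ) := by
    have h := congrArg (fun x : ℝ => (x : ℂ)) hsum
    push_cast at h
    exact h
  have e2 : (a : ℂ) * ((rp : ℂ) * (rm : ℂ)) = (c : ℂ) := by
    have h := congrArg (fun x : ℝ => (x : ℂ)) hprod
    push_cast at h
    exact h
  have e1' : C ((a : ℂ)) * C ((rp : ℂ) + (rm : ℂ)) = C (-(b : ℂ)) := by rw [← C_mul, e1]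
  have e2' : C ((a : ℂ)) * C ((rp : ℂ) * (rm : ℂ)) = C ((c : ℂ)) := by rw [← C_mul, e2]
  have hfact : C (a : ℂ) * X ^ (2 * k) + C (b : ℂ) * X ^ k + C (c : ℂ) =
      C (a : ℂ) * ((X ^ k - C (rp : ℂ)) * (X ^ k - C (rm : ℂ))) := by
    have expand : (X ^ k - C ((rp : ℝ) : ℂ)) * (X ^ k - C ((rm : ℝ) : ℂ)) =
        X ^ (2 * k) - C ((rp : ℂ) + (rm : ℂ)) * X ^ k + C ((rp : ℂ) * (rm : ℂ)) := by
      rw [two_mul, pow_add, C_add, C_mul]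
      ring
    calc C (a : ℂ) * X ^ (2 * k) + C (b : ℂ) * X ^ k + C (c : ℂ)
        = C (a : ℂ) * X ^ (2 * k) - C (-(b : ℂ)) * X ^ k + C ((c : ℂ)) := by
          rw [C_neg]; ring
      _ = C (a : ℂ) * X ^ (2 * k) - C ((a : ℂ)) * C ((rp : ℂ) + (rm : ℂ)) * X ^ k
            + C ((a : ℂ)) * C ((rp : ℂ) * (rm : ℂ)) := by rw [e1', e2']
      _ = C (a : ℂ) * (X ^ (2 * k) - C ((rp : ℂ) + (rm : ℂ)) * X ^ k
            + C ((rp : ℂ) * (rm : ℂ))) := by ring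
      _ = C (a : ℂ) * ((X ^ k - C (rp : ℂ)) * (X ^ k - C (rm : ℂ))) := by rw [expand]
  have ha0 : (a : ℂ) ≠ 0 := by exact_mod_cast ha.ne'
  have hXp : (X ^ k - C ((rp : ℝ) : ℂ) : Polynomial ℂ) ≠ 0 := (monic_X_pow_sub_C _ hk0).ne_zero
  have hXm : (X ^ k - C ((rm : ℝ) : ℂ) : Polynomial ℂ) ≠ 0 := (monic_X_pow_sub_C _ hk0).ne_zero
  rw [hfact, mm_mul _ _ (by simpa using ha0) (mul_ne_zero hXp hXm), mm_mul _ _ hXp hXm,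
    mm_C, mm_pow_sub k hk0, mm_pow_sub k hk0]
  have hna : ‖(a : ℂ)‖ = (a : ℝ) := by
    rw [show ((a : ℂ)) = (((a : ℝ) : ℝ) : ℂ) by push_cast; ring]
    simp [abs_of_pos hA0]
  have hnp : ‖((rp : ℝ) : ℂ)‖ = |rp| := by simp
  have hnm : ‖((rm : ℝ) : ℂ)‖ = |rm| := by simp
  rw [hna, hnp, hnm, ← hs]
  have habs : ((|b| : ℤ) : ℝ) = |(b : ℝ)| := by push_cast; ring
  rw [habs]
  -- now real arithmetic
  have hsB : |(b : ℝ)| ≤ s := by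
    rw [hs, show |(b : ℝ)| = Real.sqrt ((b : ℝ) ^ 2) by rw [Real.sqrt_sq_eq_abs]]
    apply Real.sqrt_le_sqrt
    nlinarith
  have hsle : s ≤ 2 * a + |(b : ℝ)| := by
    have hB2 : ((b : ℝ)) ^ 2 = |(b : ℝ)| ^ 2 := (sq_abs _).symm
    have hle : (b : ℝ) ^ 2 - 4 * a * c ≤ (2 * a + |(b : ℝ)|) ^ 2 := by
      nlinarith [abs_nonneg (b : ℝ)]
    calc s = Real.sqrt ((b : ℝ) ^ 2 - 4 * a * c) := hs
      _ ≤ Real.sqrt ((2 * a + |(b : ℝ)|) ^ 2) := Real.sqrt_le_sqrt hle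
      _ = 2 * a + |(b : ℝ)| := Real.sqrt_sq (by positivity)
  have hsge : 2 * a - |(b : ℝ)| ≤ s := by
    rcases le_or_gt (2 * (a : ℝ) - |(b : ℝ)|) 0 with h | h
    · linarith
    · have hB2 : ((b : ℝ)) ^ 2 = |(b : ℝ)| ^ 2 := (sq_abs _).symm
      have : (2 * (a : ℝ) - |(b : ℝ)|) ^ 2 ≤ (b : ℝ) ^ 2 - 4 * a * c := by
        nlinarith [abs_nonneg (b : ℝ)]
      nlinarith [hs2]
  rcases le_or_gt 0 (b : ℝ) with hb | hb
  · have hBa : |(b : ℝ)| = (b : ℝ) := abs_of_nonneg hb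
    have hrm_abs : |rm| = ((b : ℝ) + s) / (2 * a) := by
      rw [hrm, abs_div, abs_of_pos (by positivity : (0:ℝ) < 2 * a),
        abs_of_nonpos (by nlinarith [hsB, hBa] : -(b : ℝ) - s ≤ 0)]
      ring_nf
    have hrp_abs : |rp| = (-(b : ℝ) + s) / (2 * a) := by
      rw [hrp, abs_div, abs_of_pos (by positivity : (0:ℝ) < 2 * a),
        abs_of_nonneg (by nlinarith [hsB, hBa] : (0:ℝ) ≤ -(b : ℝ) + s)]
    have h1m : 1 ≤ |rm| := by
      rw [hrm_abs, le_div_iff₀ (by positivity)]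
      nlinarith [hsge, hBa]
    have h1p : |rp| ≤ 1 := by
      rw [hrp_abs, div_le_one (by positivity)]
      nlinarith [hsle, hBa]
    rw [max_eq_left h1p, max_eq_right h1m, hrm_abs, hBa]
    field_simp
  · have hBa : |(b : ℝ)| = -(b : ℝ) := abs_of_neg hb
    have hrp_abs : |rp| = (-(b : ℝ) + s) / (2 * a) := by
      rw [hrp, abs_div, abs_of_pos (by positivity : (0:ℝ) < 2 * a),
        abs_of_nonneg (by nlinarith [hsB, hBa] : (0:ℝ) ≤ -(b : ℝ) + s)]
    have hrm_abs : |rm| = (s + (b : ℝ)) / (2 * a) := by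
      rw [hrm, abs_div, abs_of_pos (by positivity : (0:ℝ) < 2 * a),
        abs_of_nonpos (by nlinarith [hsB, hBa] : -(b : ℝ) - s ≤ 0)]
      ring_nf
    have h1p : 1 ≤ |rp| := by
      rw [hrp_abs, le_div_iff₀ (by positivity)]
      nlinarith [hsge, hBa]
    have h1m : |rm| ≤ 1 := by
      rw [hrm_abs, div_le_one (by positivity)]
      nlinarith [hsle, hBa]
    rw [max_eq_right h1p, max_eq_left h1m, hrp_abs, hBa]
    field_simp
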